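/- Let X be a topological space such that every point x ∈ X is contained in some cozero-set W whose closure cl_X(W), endowed with the subspace topology, is w-compact. Then the following are equivalent: (i) X is K^θ-compact; (ii) X is w-compact; (iii) the image τX = Φ_X(X) is a compact subset of I^{C(X,I)}. -/

import Mathlib

open Set Topology

universe u

/-- The evaluation map `Φ_X : X → I^{C(X,I)}`, `x ↦ (f(x))_{f ∈ C(X,I)}`. -/
def evalMap (X : Type u) [TopologicalSpace X] : X → (C(X, unitInterval) → unitInterval) :=
  fun x f => f x

/-- The `K^θ`-closure of a subset `A ⊆ X`:  `c^θ_X(A) = Φ_X⁻¹(cl(Φ_X(A)))`. -/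
def thetaClosure (X : Type u) [TopologicalSpace X] (A : Set X) : Set X :=
  evalMap X ⁻¹' closure (evalMap X '' A)

/-- `X` is `K^θ`-compact if all projections `π_Y : X × Y → Y` preserve the `K^θ`-closure. -/
def IsKThetaCompact (X : Type u) [TopologicalSpace X] : Prop :=
  ∀ (Y : Type u) [TopologicalSpace Y], ∀ M : Set (X × Y),
    Prod.snd '' thetaClosure (X × Y) M = thetaClosure Y (Prod.snd '' M)

/-- A cozero-set of `X`: `{x | g(x) > 0}` for some continuous `g : X → [0,1]`. -/
def IsCozeroSet (X : Type u) [TopologicalSpace X] (G : Set X) : Prop :=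
  ∃ g : C(X, unitInterval), G = {x | 0 < g x}

/-- A `τ`-open set is a union of cozero-sets. -/
def IsTauOpen (X : Type u) [TopologicalSpace X] (A : Set X) : Prop :=
  ∃ 𝒞 : Set (Set X), (∀ P ∈ 𝒞, IsCozeroSet X P) ∧ A = ⋃₀ 𝒞

/-- `X` is w-compact if every family of `τ`-open subsets of `X` with the finite intersection
property has `⋂ cl(P) ≠ ∅`. -/
def IsWCompact (X : Type u) [TopologicalSpace X] : Prop :=
  ∀ S : Set (Set X), (∀ P ∈ S, IsTauOpen X P) →
    (∀ T : Finset (Set X), ↑T ⊆ S → (⋂₀ (T : Set (Set X))).Nonempty) →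
    (⋂ P ∈ S, closure P).Nonempty


lemma memClosurePi {ι : Type*} (p : ι → unitInterval) (A : Set (ι → unitInterval)) :
    p ∈ closure A ↔ ∀ (T : Finset ι) (ε : ℝ), 0 < ε → ∃ a ∈ A, ∀ i ∈ T, dist (a i) (p i) < ε := by
  constructor
  · intro hp T ε hε
    have hset : {r : ι → unitInterval | ∀ i ∈ T, dist (r i) (p i) < ε}
        = Set.pi ↑T (fun i => Metric.ball (p i) ε) := by
      ext r; simp [Set.mem_pi, Metric.mem_ball]
    have hopen : IsOpen {r : ι → unitInterval | ∀ i ∈ T, dist (r i) (p i) < ε} := by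
      rw [hset]; exact isOpen_set_pi T.finite_toSet (fun i _ => Metric.isOpen_ball)
    have hmem : p ∈ {r : ι → unitInterval | ∀ i ∈ T, dist (r i) (p i) < ε} := by
      intro i _; simpa using hε
    rcases mem_closure_iff.mp hp _ hopen hmem with ⟨a, ha, haA⟩
    exact ⟨a, haA, ha⟩
  · intro H
    rw [mem_closure_iff_nhds]
    intro t ht
    rw [nhds_pi, Filter.mem_pi] at ht
    obtain ⟨I, hIfin, u, hu, hsub⟩ := ht
    have hch : ∀ i : ι, ∃ ε : ℝ, 0 < ε ∧ (i ∈ I → Metric.ball (p i) ε ⊆ u i) := by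
      intro i
      by_cases hi : i ∈ I
      · obtain ⟨ε, hε, hb⟩ := Metric.mem_nhds_iff.mp (hu i)
        exact ⟨ε, hε, fun _ => hb⟩
      · exact ⟨1, one_pos, fun h => absurd h hi⟩
    choose εf hεf hball using hch
    by_cases hT : hIfin.toFinset.Nonempty
    · obtain ⟨a, haA, ha⟩ := H hIfin.toFinset (hIfin.toFinset.inf' hT εf)
        (by rw [Finset.lt_inf'_iff]; exact fun i _ => hεf i)
      refine ⟨a, hsub ?_, haA⟩
      intro i hi
      have hiT : i ∈ hIfin.toFinset := hIfin.mem_toFinset.mpr hi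
      exact hball i hi (Metric.mem_ball.mpr (lt_of_lt_of_le (ha i hiT) (Finset.inf'_le _ hiT)))
    · obtain ⟨a, haA, _⟩ := H ∅ 1 one_pos
      refine ⟨a, hsub ?_, haA⟩
      intro i hi
      exact absurd (hIfin.mem_toFinset.mpr hi)
        (by simp [Finset.not_nonempty_iff_eq_empty.mp hT])

lemma isCozeroSet_of_real {X : Type u} [TopologicalSpace X] (u : X → ℝ) (hu : Continuous u) :
    IsCozeroSet X {x | 0 < u x} := by
  refine ⟨⟨fun x => ⟨min 1 (max 0 (u x)),
    ⟨le_min zero_le_one (le_max_left 0 _), min_le_left _ _⟩⟩,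
    Continuous.subtype_mk (continuous_const.min (continuous_const.max hu)) _⟩, ?_⟩
  ext x
  simp only [Set.mem_setOf_eq, ← Subtype.coe_lt_coe]
  constructor
  · intro h
    exact lt_min one_pos (lt_max_iff.mpr (Or.inr h))
  · intro h
    rcases lt_max_iff.mp (lt_of_lt_of_le h (min_le_right _ _)) with h' | h'
    · exact absurd h' (lt_irrefl _)
    · exact h'
noncomputable def supFun {X Y : Type u} [TopologicalSpace X] [TopologicalSpace Y]
    (Z : Set X) (s : C(X × Y, unitInterval)) (b : Y) : ℝ :=
  ⨆ a : Z, (s (a.1, b) : ℝ)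

lemma supFun_bddAbove {X Y : Type u} [TopologicalSpace X] [TopologicalSpace Y]
    (Z : Set X) (s : C(X × Y, unitInterval)) (b : Y) :
    BddAbove (Set.range fun a : Z => (s (a.1, b) : ℝ)) := by
  refine ⟨1, ?_⟩
  rintro _ ⟨a, rfl⟩
  exact (s (a.1, b)).2.2

lemma le_supFun {X Y : Type u} [TopologicalSpace X] [TopologicalSpace Y]
    (Z : Set X) (s : C(X × Y, unitInterval)) {a : X} (ha : a ∈ Z) (b : Y) :
    (s (a, b) : ℝ) ≤ supFun Z s b :=
  le_ciSup (supFun_bddAbove Z s b) ⟨a, ha⟩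

lemma supFun_le {X Y : Type u} [TopologicalSpace X] [TopologicalSpace Y]
    (Z : Set X) (hne : Z.Nonempty) (s : C(X × Y, unitInterval)) {b : Y} {t : ℝ}
    (ht : ∀ a ∈ Z, (s (a, b) : ℝ) ≤ t) : supFun Z s b ≤ t := by
  haveI : Nonempty ↥Z := hne.to_subtype
  exact ciSup_le fun a => ht a.1 a.2

lemma supFun_nonneg {X Y : Type u} [TopologicalSpace X] [TopologicalSpace Y]
    (Z : Set X) (hne : Z.Nonempty) (s : C(X × Y, unitInterval)) (b : Y) :
    0 ≤ supFun Z s b :=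
  le_trans (s (hne.some, b)).2.1 (le_supFun Z s hne.some_mem b)

lemma supFun_le_one {X Y : Type u} [TopologicalSpace X] [TopologicalSpace Y]
    (Z : Set X) (hne : Z.Nonempty) (s : C(X × Y, unitInterval)) (b : Y) :
    supFun Z s b ≤ 1 :=
  supFun_le Z hne s fun a _ => (s (a, b)).2.2

lemma supFun_continuous {X Y : Type u} [TopologicalSpace X] [TopologicalSpace Y]
    (Z : Set X) (hne : Z.Nonempty) (hw : IsWCompact ↥Z) (s : C(X × Y, unitInterval)) :
    Continuous (supFun Z s) := by
  haveI : Nonempty ↥Z := hne.to_subtype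
  rw [continuous_iff_continuousAt]
  intro b₀
  rw [ContinuousAt, Metric.tendsto_nhds]
  intro ε hε
  have husc : ∃ O : Set Y, IsOpen O ∧ b₀ ∈ O ∧
      ∀ b ∈ O, ∀ a ∈ Z, (s (a, b) : ℝ) ≤ supFun Z s b₀ + ε / 2 := by
    by_contra hcon
    push_neg at hcon
    set t : ℝ := supFun Z s b₀ + ε / 2 with ht
    set SZ : Set (Set ↥Z) := {P | ∃ O : Set Y, IsOpen O ∧ b₀ ∈ O ∧
      P = {z : ↥Z | ∃ b ∈ O, t < (s (z.1, b) : ℝ)}} with hSZ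
    have htau : ∀ P ∈ SZ, IsTauOpen ↥Z P := by
      rintro P ⟨O, hO, hbO, rfl⟩
      refine ⟨(fun b => {z : ↥Z | 0 < (s (z.1, b) : ℝ) - t}) '' O, ?_, ?_⟩
      · rintro _ ⟨b, _, rfl⟩
        exact isCozeroSet_of_real _
          (((continuous_subtype_val.comp (s.continuous.comp
            (continuous_subtype_val.prodMk continuous_const)))).sub continuous_const)
      · ext z
        simp only [Set.mem_setOf_eq, Set.sUnion_image, Set.mem_iUnion, sub_pos]
        tauto
    have hfip : ∀ T : Finset (Set ↥Z), ↑T ⊆ SZ → (⋂₀ (T : Set (Set ↥Z))).Nonempty := by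
      intro T hT
      have hch : ∀ P : {P // P ∈ T}, ∃ O : Set Y, IsOpen O ∧ b₀ ∈ O ∧
          (P : Set ↥Z) = {z : ↥Z | ∃ b ∈ O, t < (s (z.1, b) : ℝ)} := fun P => hT P.2
      choose Of hOf hbOf hPf using hch
      have hO' : IsOpen (⋂ P : {P // P ∈ T}, Of P) := isOpen_iInter_of_finite hOf
      have hb' : b₀ ∈ ⋂ P : {P // P ∈ T}, Of P := Set.mem_iInter.mpr fun P => hbOf P
      obtain ⟨b, hb, a, haZ, hat⟩ := hcon _ hO' hb'
      refine ⟨⟨a, haZ⟩, ?_⟩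
      intro P hP
      have hPe : P = {z : ↥Z | ∃ b ∈ Of ⟨P, hP⟩, t < (s (z.1, b) : ℝ)} := hPf ⟨P, hP⟩
      rw [hPe]
      exact ⟨b, Set.mem_iInter.mp hb ⟨P, hP⟩, hat⟩
    obtain ⟨zc, hzc⟩ := hw SZ htau hfip
    have hz : ∀ P ∈ SZ, zc ∈ closure P := Set.mem_iInter₂.mp hzc
    have hval : (s (zc.1, b₀) : ℝ) < t := by
      have := le_supFun Z s zc.2 b₀
      rw [ht]; linarith
    have hVopen : IsOpen {ab : X × Y | (s ab : ℝ) < t} :=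
      isOpen_lt (continuous_subtype_val.comp s.continuous) continuous_const
    obtain ⟨U, O₀, hU, hO₀, hzU, hbO₀, hUO⟩ := isOpen_prod_iff.mp hVopen zc.1 b₀ hval
    have hP₀ : {z : ↥Z | ∃ b ∈ O₀, t < (s (z.1, b) : ℝ)} ∈ SZ := ⟨O₀, hO₀, hbO₀, rfl⟩
    obtain ⟨z', hz'U, hz'P⟩ := mem_closure_iff.mp (hz _ hP₀) (Subtype.val ⁻¹' U)
      (hU.preimage continuous_subtype_val) hzU
    obtain ⟨b, hbO, hbt⟩ := hz'P
    exact absurd (hUO (Set.mk_mem_prod hz'U hbO)) (not_lt.mpr (le_of_lt hbt))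
  have hlsc : ∃ O : Set Y, IsOpen O ∧ b₀ ∈ O ∧
      ∀ b ∈ O, supFun Z s b₀ - ε / 2 < supFun Z s b := by
    obtain ⟨a₀, ha₀⟩ := exists_lt_of_lt_ciSup
      (show supFun Z s b₀ - ε / 2 < supFun Z s b₀ by linarith)
    refine ⟨{b | supFun Z s b₀ - ε / 2 < (s (a₀.1, b) : ℝ)},
      isOpen_lt continuous_const (continuous_subtype_val.comp (s.continuous.comp
        (continuous_const.prodMk continuous_id))), ha₀, ?_⟩
    intro b hb
    exact lt_of_lt_of_le hb (le_supFun Z s a₀.2 b)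
  obtain ⟨O₁, h1o, h1b, h1⟩ := husc
  obtain ⟨O₂, h2o, h2b, h2⟩ := hlsc
  refine Filter.eventually_of_mem (IsOpen.mem_nhds (h1o.inter h2o) ⟨h1b, h2b⟩) ?_
  rintro b ⟨hb1, hb2⟩
  rw [Real.dist_eq, abs_sub_lt_iff]
  have hub : supFun Z s b ≤ supFun Z s b₀ + ε / 2 := supFun_le Z hne s (h1 b hb1)
  have hlb := h2 b hb2
  constructor <;> linarith
lemma core {X : Type u} [TopologicalSpace X] (W : Set X) (gW : C(X, unitInterval))
    (hWg : W = {x | 0 < gW x}) (hZ : IsWCompact ↥(closure W)) (c : ℝ) (hc : 0 < c)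
    (S : Set (Set X)) (hS : ∀ P ∈ S, IsTauOpen X P)
    (htr : ∀ T : Finset (Set X), ↑T ⊆ S → ∃ a, a ∈ ⋂₀ (T : Set (Set X)) ∧ c < (gW a : ℝ)) :
    (⋂ P ∈ S, closure P).Nonempty := by
  classical
  set Z := closure W with hZdef
  have hmemW : ∀ a : X, c < (gW a : ℝ) → a ∈ Z := by
    intro a ha
    apply subset_closure
    rw [hWg]
    show (0 : unitInterval) < gW a
    rw [← Subtype.coe_lt_coe]
    simpa using lt_trans hc ha
  set R : Set X → Set ↥Z := fun P => {z : ↥Z | z.1 ∈ P ∧ c < (gW z.1 : ℝ)} with hR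
  have htauZ : ∀ P ∈ S, IsTauOpen ↥Z (R P) := by
    intro P hP
    obtain ⟨𝒞, h𝒞, rfl⟩ := hS P hP
    show IsTauOpen ↥Z {z : ↥Z | z.1 ∈ ⋃₀ 𝒞 ∧ c < (gW z.1 : ℝ)}
    refine ⟨(fun C => {z : ↥Z | z.1 ∈ C ∧ c < (gW z.1 : ℝ)}) '' 𝒞, ?_, ?_⟩
    · rintro _ ⟨C, hC, rfl⟩
      obtain ⟨g, rfl⟩ := h𝒞 C hC
      show IsCozeroSet ↥Z {z : ↥Z | z.1 ∈ {x | 0 < g x} ∧ c < (gW z.1 : ℝ)}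
      have heq : {z : ↥Z | z.1 ∈ {x | 0 < g x} ∧ c < (gW z.1 : ℝ)}
          = {z : ↥Z | 0 < min ((g z.1 : ℝ)) ((gW z.1 : ℝ) - c)} := by
        ext z
        simp only [Set.mem_setOf_eq, lt_min_iff, sub_pos, ← Subtype.coe_lt_coe]
        simp
      rw [heq]
      exact isCozeroSet_of_real _ (Continuous.min
        (continuous_subtype_val.comp (g.continuous.comp continuous_subtype_val))
        ((continuous_subtype_val.comp (gW.continuous.comp continuous_subtype_val)).sub
          continuous_const))
    · ext z
      simp only [Set.mem_setOf_eq, Set.sUnion_image, Set.mem_iUnion, Set.mem_sUnion]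
      tauto
  have hfipZ : ∀ T : Finset (Set ↥Z), ↑T ⊆ R '' S → (⋂₀ (T : Set (Set ↥Z))).Nonempty := by
    intro T hT
    have hch : ∀ Q : {Q // Q ∈ T}, ∃ P, P ∈ S ∧ R P = Q := fun Q => hT Q.2
    choose Pf hPfS hPfR using hch
    have hsub : ↑(T.attach.image Pf) ⊆ S := by
      intro P hP
      simp only [Finset.coe_image, Set.mem_image] at hP
      obtain ⟨Q, _, rfl⟩ := hP
      exact hPfS Q
    obtain ⟨a, haI, hagW⟩ := htr (T.attach.image Pf) hsub
    refine ⟨⟨a, hmemW a hagW⟩, ?_⟩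
    intro Q hQ
    have hQR : R (Pf ⟨Q, hQ⟩) = Q := hPfR ⟨Q, hQ⟩
    rw [← hQR]
    refine ⟨?_, hagW⟩
    refine Set.mem_sInter.mp haI _ ?_
    simp only [Finset.coe_image, Set.mem_image, Finset.mem_coe]
    exact ⟨⟨Q, hQ⟩, Finset.mem_attach _ _, rfl⟩
  obtain ⟨zc, hzc⟩ := hZ (R '' S) (by rintro _ ⟨P, hP, rfl⟩; exact htauZ P hP) hfipZ
  refine ⟨zc.1, Set.mem_iInter₂.mpr ?_⟩
  intro P hP
  have h1 : zc ∈ closure (R P) := Set.mem_iInter₂.mp hzc (R P) ⟨P, hP, rfl⟩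
  have h3 : zc ∈ closure (Subtype.val ⁻¹' P) :=
    closure_mono (fun z hz => hz.1) h1
  exact continuous_subtype_val.closure_preimage_subset P h3
lemma isTauOpen_of_isCozeroSet {X : Type u} [TopologicalSpace X] {P : Set X}
    (h : IsCozeroSet X P) : IsTauOpen X P :=
  ⟨{P}, by rintro Q hQ; rw [Set.mem_singleton_iff] at hQ; rwa [hQ],
    (Set.sUnion_singleton P).symm⟩

lemma w2c {X : Type u} [TopologicalSpace X] (hw : IsWCompact X) :
    IsCompact (Set.range (evalMap X)) := by
  classical
  have hclosed : closure (Set.range (evalMap X)) ⊆ Set.range (evalMap X) := by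
    intro p hp
    have hne : (Set.range (evalMap X)).Nonempty := by
      by_contra hcon
      rw [Set.not_nonempty_iff_eq_empty] at hcon
      rw [hcon, closure_empty] at hp
      exact hp
    obtain ⟨_, x₀, rfl⟩ := hne
    set S : Set (Set X) := {P | ∃ (f : C(X, unitInterval)) (ε : ℝ), 0 < ε ∧
      P = {x | dist (f x) (p f) < ε}} with hSdef
    have htau : ∀ P ∈ S, IsTauOpen X P := by
      rintro P ⟨f, ε, hε, rfl⟩
      have heq : {x | dist (f x) (p f) < ε} = {x | 0 < ε - dist (f x) (p f)} := by
        ext x; simp [sub_pos]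
      rw [heq]
      exact isTauOpen_of_isCozeroSet (isCozeroSet_of_real _
        (continuous_const.sub (f.continuous.dist continuous_const)))
    have hfip : ∀ T : Finset (Set X), ↑T ⊆ S → (⋂₀ (T : Set (Set X))).Nonempty := by
      intro T hT
      have hch : ∀ Q : {Q // Q ∈ T}, ∃ (f : C(X, unitInterval)) (ε : ℝ), 0 < ε ∧
          (Q : Set X) = {x | dist (f x) (p f) < ε} := fun Q => hT Q.2
      choose ff εf hεf hQf using hch
      by_cases hTne : T.attach.Nonempty
      · have hε : 0 < T.attach.inf' hTne εf := by
          rw [Finset.lt_inf'_iff]; exact fun Q _ => hεf Q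
        obtain ⟨q, hqA, hq⟩ := (memClosurePi p _).mp hp (T.attach.image ff) _ hε
        obtain ⟨x, rfl⟩ := hqA
        refine ⟨x, ?_⟩
        intro Q hQ
        have hQe : Q = {x | dist (ff ⟨Q, hQ⟩ x) (p (ff ⟨Q, hQ⟩)) < εf ⟨Q, hQ⟩} := hQf ⟨Q, hQ⟩
        rw [hQe]
        have hmem : ff ⟨Q, hQ⟩ ∈ T.attach.image ff :=
          Finset.mem_image_of_mem ff (Finset.mem_attach _ _)
        exact lt_of_lt_of_le (hq _ hmem) (Finset.inf'_le _ (Finset.mem_attach _ _))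
      · have hTe : T = ∅ := by
          rwa [Finset.attach_nonempty_iff, Finset.not_nonempty_iff_eq_empty] at hTne
        refine ⟨x₀, ?_⟩
        simp [hTe]
    obtain ⟨z, hz⟩ := hw S htau hfip
    have hz' : ∀ P ∈ S, z ∈ closure P := Set.mem_iInter₂.mp hz
    refine ⟨z, ?_⟩
    funext f
    show f z = p f
    have hd : ∀ n : ℕ, dist (f z) (p f) ≤ 1 / (n + 1) := by
      intro n
      have hP : {x | dist (f x) (p f) < 1 / (n + 1)} ∈ S := ⟨f, 1 / (n + 1), by positivity, rfl⟩
      have hcz := hz' _ hP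
      have h1 : f z ∈ closure (f '' {x | dist (f x) (p f) < 1 / (n + 1)}) :=
        (image_closure_subset_closure_image f.continuous) (Set.mem_image_of_mem f hcz)
      have h2 : f '' {x | dist (f x) (p f) < 1 / (n + 1)} ⊆ Metric.ball (p f) (1 / (n + 1)) := by
        rintro _ ⟨x, hx, rfl⟩; exact hx
      have h3 := closure_mono h2 h1
      have h4 := Metric.closure_ball_subset_closedBall h3
      exact Metric.mem_closedBall.mp h4
    have hzero : dist (f z) (p f) = 0 := by
      by_contra hne0
      have hpos : 0 < dist (f z) (p f) := lt_of_le_of_ne dist_nonneg (Ne.symm hne0)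
      obtain ⟨n, hn⟩ := exists_nat_one_div_lt hpos
      exact absurd (hd n) (not_le.mpr hn)
    exact eq_of_dist_eq_zero hzero
  exact (isClosed_of_closure_subset hclosed).isCompact
lemma c2w {X : Type u} [TopologicalSpace X]
    (h : ∀ x : X, ∃ W : Set X, IsCozeroSet X W ∧ x ∈ W ∧ IsWCompact ↥(closure W))
    (hcomp : IsCompact (Set.range (evalMap X))) : IsWCompact X := by
  classical
  intro S hS hfip
  haveI : Nonempty {T : Finset (Set X) // ↑T ⊆ S} := ⟨⟨∅, by simp⟩⟩
  set K : {T : Finset (Set X) // ↑T ⊆ S} → Set (C(X, unitInterval) → unitInterval) :=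
    fun T => closure (evalMap X '' ⋂₀ (T.1 : Set (Set X))) with hK
  have hdir : Directed (· ⊇ ·) K := by
    intro T T'
    refine ⟨⟨T.1 ∪ T'.1, by rw [Finset.coe_union]; exact Set.union_subset T.2 T'.2⟩, ?_, ?_⟩
    · apply closure_mono
      apply Set.image_mono
      apply Set.sInter_subset_sInter
      rw [Finset.coe_union]
      exact Set.subset_union_left
    · apply closure_mono
      apply Set.image_mono
      apply Set.sInter_subset_sInter
      rw [Finset.coe_union]
      exact Set.subset_union_right
  have hnon : ∀ T, (K T).Nonempty := fun T =>
    Set.Nonempty.mono subset_closure ((hfip T.1 T.2).image (evalMap X))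
  have hcl : ∀ T, IsClosed (K T) := fun _ => isClosed_closure
  have hcpt : ∀ T, IsCompact (K T) := fun T => (hcl T).isCompact
  obtain ⟨p, hp⟩ :=
    IsCompact.nonempty_iInter_of_directed_nonempty_isCompact_isClosed K hdir hnon hcpt hcl
  have hpT : ∀ T : Finset (Set X), ↑T ⊆ S → p ∈ closure (evalMap X '' ⋂₀ (T : Set (Set X))) :=
    fun T hT => Set.mem_iInter.mp hp ⟨T, hT⟩
  have hprange : p ∈ Set.range (evalMap X) := by
    have h0 := hpT ∅ (by simp)
    simp only [Finset.coe_empty, Set.sInter_empty, Set.image_univ] at h0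
    rwa [hcomp.isClosed.closure_eq] at h0
  obtain ⟨x, rfl⟩ := hprange
  obtain ⟨W, ⟨gW, hWg⟩, hxW, hZw⟩ := h x
  have hc : (0:ℝ) < (gW x : ℝ) := by
    have hx' := hxW
    rw [hWg] at hx'
    simpa using Subtype.coe_lt_coe.mpr hx'
  refine core W gW hWg hZw ((gW x : ℝ) / 2) (by linarith) S hS ?_
  intro T hT
  obtain ⟨q, hqA, hq⟩ := (memClosurePi _ _).mp (hpT T hT) {gW} ((gW x : ℝ) / 2) (by linarith)
  obtain ⟨a, haI, rfl⟩ := hqA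
  refine ⟨a, haI, ?_⟩
  have hd := hq gW (Finset.mem_singleton_self gW)
  rw [Subtype.dist_eq, Real.dist_eq, abs_sub_lt_iff] at hd
  have hd2 : (gW x : ℝ) - (gW a : ℝ) < (gW x : ℝ) / 2 := hd.2
  linarith
lemma w2kt {X : Type u} [TopologicalSpace X]
    (h : ∀ x : X, ∃ W : Set X, IsCozeroSet X W ∧ x ∈ W ∧ IsWCompact ↥(closure W))
    (hcomp : IsCompact (Set.range (evalMap X))) : IsKThetaCompact X := by
  classical
  intro Y _ M
  apply Set.Subset.antisymm
  · rintro _ ⟨⟨x, y⟩, hxy, rfl⟩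
    show evalMap Y y ∈ closure (evalMap Y '' (Prod.snd '' M))
    set R : (C(X × Y, unitInterval) → unitInterval) → (C(Y, unitInterval) → unitInterval) :=
      fun r g => r (g.comp ⟨Prod.snd, continuous_snd⟩) with hRdef
    have hRcont : Continuous R := continuous_pi fun g => continuous_apply _
    have h1 : R (evalMap (X × Y) (x, y)) ∈ closure (R '' (evalMap (X × Y) '' M)) :=
      image_closure_subset_closure_image hRcont (Set.mem_image_of_mem R hxy)
    have h2 : R '' (evalMap (X × Y) '' M) = evalMap Y '' (Prod.snd '' M) := by
      rw [← Set.image_comp, ← Set.image_comp]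
      rfl
    rw [h2] at h1
    exact h1
  · intro y hy
    have hy' : evalMap Y y ∈ closure (evalMap Y '' (Prod.snd '' M)) := hy
    have hMne : M.Nonempty := by
      by_contra hcon
      rw [Set.not_nonempty_iff_eq_empty] at hcon
      rw [hcon] at hy'
      simp only [Set.image_empty, closure_empty] at hy'
      exact hy'
    set fstCM : C(X, unitInterval) → C(X × Y, unitInterval) :=
      fun f => f.comp ⟨Prod.fst, continuous_fst⟩ with hfstCM
    set Mset : Finset C(Y, unitInterval) → ℕ → Set (X × Y) := fun G n =>
      {m ∈ M | ∀ g ∈ G, dist (g m.2) (g y) < 1 / (n + 1)} with hMsetdef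
    set K : Finset C(Y, unitInterval) × ℕ → Set (C(X × Y, unitInterval) → unitInterval) :=
      fun i => closure (evalMap (X × Y) '' Mset i.1 i.2) with hKdef
    have hMsetne : ∀ G n, (Mset G n).Nonempty := by
      intro G n
      have hpos : (0:ℝ) < 1 / (n + 1) := by positivity
      obtain ⟨q, hqA, hq⟩ := (memClosurePi _ _).mp hy' G (1 / (n + 1)) hpos
      obtain ⟨b, ⟨m, hm, rfl⟩, rfl⟩ := hqA
      exact ⟨m, hm, fun g hg => hq g hg⟩
    have hmono : ∀ (G G' : Finset C(Y, unitInterval)) (n n' : ℕ), G ⊆ G' → n ≤ n' →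
        Mset G' n' ⊆ Mset G n := by
      intro G G' n n' hG hn
      rintro m ⟨hmM, hmd⟩
      refine ⟨hmM, fun g hg => lt_of_lt_of_le (hmd g (hG hg)) ?_⟩
      apply one_div_le_one_div_of_le (by positivity)
      have hcast : (n:ℝ) ≤ (n':ℝ) := Nat.cast_le.mpr hn
      linarith
    have hdir : Directed (· ⊇ ·) K := fun i j =>
      ⟨⟨i.1 ∪ j.1, max i.2 j.2⟩,
        closure_mono (Set.image_mono
          (hmono _ _ _ _ Finset.subset_union_left (le_max_left _ _))),
        closure_mono (Set.image_mono
          (hmono _ _ _ _ Finset.subset_union_right (le_max_right _ _)))⟩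
    obtain ⟨p, hp⟩ := IsCompact.nonempty_iInter_of_directed_nonempty_isCompact_isClosed K hdir
      (fun i => ((hMsetne i.1 i.2).image _).mono subset_closure)
      (fun _ => isClosed_closure.isCompact) (fun _ => isClosed_closure)
    have hpK : ∀ G n, p ∈ closure (evalMap (X × Y) '' Mset G n) :=
      fun G n => Set.mem_iInter.mp hp (G, n)
    have hpM : p ∈ closure (evalMap (X × Y) '' M) := by
      have h0 := hpK ∅ 0
      have hM0 : Mset ∅ 0 = M := by ext m; simp [hMsetdef]
      rwa [hM0] at h0
    have hq : ∃ x : X, ∀ f : C(X, unitInterval), p (fstCM f) = f x := by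
      set Rx : (C(X × Y, unitInterval) → unitInterval) → (C(X, unitInterval) → unitInterval) :=
        fun r f => r (fstCM f) with hRx
      have hRxcont : Continuous Rx := continuous_pi fun f => continuous_apply _
      have h1 : Rx p ∈ closure (Rx '' (evalMap (X × Y) '' M)) :=
        image_closure_subset_closure_image hRxcont (Set.mem_image_of_mem Rx hpM)
      have h2 : Rx '' (evalMap (X × Y) '' M) ⊆ Set.range (evalMap X) := by
        rintro _ ⟨_, ⟨m, _, rfl⟩, rfl⟩
        exact ⟨m.1, rfl⟩
      have h4 : Rx p ∈ Set.range (evalMap X) := by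
        rw [← hcomp.isClosed.closure_eq]
        exact closure_mono h2 h1
      obtain ⟨x, hx⟩ := h4
      exact ⟨x, fun f => (congrFun hx f).symm⟩
    obtain ⟨x, hpx⟩ := hq
    obtain ⟨W, ⟨gW, hWg⟩, hxW, hZw⟩ := h x
    have hZne : (closure W).Nonempty := ⟨x, subset_closure hxW⟩
    have hc : (0:ℝ) < (gW x : ℝ) := by
      have hx' := hxW
      rw [hWg] at hx'
      simpa using Subtype.coe_lt_coe.mpr hx'
    refine ⟨(x, y), ?_, rfl⟩
    show evalMap (X × Y) (x, y) ∈ closure (evalMap (X × Y) '' M)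
    rw [memClosurePi]
    intro H ε hε
    set hyCM : C(X × Y, unitInterval) → C(X, unitInterval) := fun h' =>
      h'.comp ⟨fun a => (a, y), continuous_id.prodMk continuous_const⟩ with hhyCM
    set sF : C(X × Y, unitInterval) → C(X × Y, unitInterval) := fun h' =>
      ⟨fun ab => ⟨|(h' ab : ℝ) - (h' (ab.1, y) : ℝ)|, abs_nonneg _, by
          have h1 := (h' ab).2.1
          have h2 := (h' ab).2.2
          have h3 := (h' (ab.1, y)).2.1
          have h4 := (h' (ab.1, y)).2.2
          rw [abs_sub_le_iff]
          constructor <;> linarith⟩, by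
        apply Continuous.subtype_mk
        apply Continuous.abs
        exact (continuous_subtype_val.comp h'.continuous).sub
          (continuous_subtype_val.comp (h'.continuous.comp
            (continuous_fst.prodMk continuous_const)))⟩ with hsF
    set gH : C(X × Y, unitInterval) → C(Y, unitInterval) := fun h' =>
      ⟨fun b => ⟨supFun (closure W) (sF h') b,
          supFun_nonneg _ hZne _ _, supFun_le_one _ hZne _ _⟩,
        Continuous.subtype_mk (supFun_continuous _ hZne hZw _) _⟩ with hgH
    set δ : ℝ := min (ε / 2) ((gW x : ℝ) / 2) with hδ
    have hδpos : 0 < δ := lt_min (by linarith) (by linarith)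
    obtain ⟨n, hn⟩ := exists_nat_one_div_lt hδpos
    set G : Finset C(Y, unitInterval) := H.image gH with hG
    set T' : Finset C(X × Y, unitInterval) :=
      H.image (fun h' => fstCM (hyCM h')) ∪ {fstCM gW} with hT'
    obtain ⟨q, hqA, hqd⟩ := (memClosurePi _ _).mp (hpK G n) T' δ hδpos
    obtain ⟨m, hmMset, rfl⟩ := hqA
    obtain ⟨hmM, hmd⟩ := hmMset
    have hA : |(gW m.1 : ℝ) - (gW x : ℝ)| < δ := by
      have hd := hqd (fstCM gW) (Finset.mem_union_right _ (Finset.mem_singleton_self _))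
      rw [hpx gW] at hd
      rw [Subtype.dist_eq, Real.dist_eq] at hd
      exact hd
    have hm1Z : m.1 ∈ closure W := by
      apply subset_closure
      rw [hWg]
      show (0 : unitInterval) < gW m.1
      rw [← Subtype.coe_lt_coe]
      have habs := abs_sub_lt_iff.mp hA
      have hδ2 : δ ≤ (gW x : ℝ) / 2 := min_le_right _ _
      have : ((0 : unitInterval) : ℝ) = 0 := rfl
      rw [this]
      linarith [habs.2]
    have hB : ∀ h' ∈ H, |(h' (m.1, y) : ℝ) - (h' (x, y) : ℝ)| < δ := by
      intro h' hh'
      have hd := hqd (fstCM (hyCM h'))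
        (Finset.mem_union_left _ (Finset.mem_image_of_mem _ hh'))
      rw [hpx (hyCM h')] at hd
      rw [Subtype.dist_eq, Real.dist_eq] at hd
      exact hd
    have hC : ∀ h' ∈ H, |(h' m : ℝ) - (h' (m.1, y) : ℝ)| < δ := by
      intro h' hh'
      have hgb : dist (gH h' m.2) (gH h' y) < 1 / (n + 1) :=
        hmd (gH h') (Finset.mem_image_of_mem _ hh')
      have hgy : (gH h' y : ℝ) = 0 := by
        apply le_antisymm
        · apply supFun_le _ hZne
          intro a _
          show |(h' (a, y) : ℝ) - (h' (a, y) : ℝ)| ≤ 0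
          simp
        · exact supFun_nonneg _ hZne _ _
      have hgb' : (gH h' m.2 : ℝ) < 1 / (n + 1) := by
        rw [Subtype.dist_eq, Real.dist_eq, hgy, sub_zero] at hgb
        exact lt_of_le_of_lt (le_abs_self _) hgb
      have hle : (sF h' (m.1, m.2) : ℝ) ≤ supFun (closure W) (sF h') m.2 :=
        le_supFun _ _ hm1Z m.2
      have hsfm : (sF h' m : ℝ) = |(h' m : ℝ) - (h' (m.1, y) : ℝ)| := rfl
      have : (sF h' m : ℝ) < 1 / (n + 1) := lt_of_le_of_lt hle hgb'
      rw [hsfm] at this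
      exact lt_trans this hn
    refine ⟨evalMap (X × Y) m, Set.mem_image_of_mem _ hmM, ?_⟩
    intro h' hh'
    show dist (h' m) (h' (x, y)) < ε
    rw [Subtype.dist_eq, Real.dist_eq]
    have htri := abs_sub_le ((h' m : ℝ)) ((h' (m.1, y) : ℝ)) ((h' (x, y) : ℝ))
    have hδ1 : δ ≤ ε / 2 := min_le_left _ _
    have hChC := hC h' hh'
    have hBhB := hB h' hh'
    linarith
lemma kt2w {X : Type u} [TopologicalSpace X]
    (h : ∀ x : X, ∃ W : Set X, IsCozeroSet X W ∧ x ∈ W ∧ IsWCompact ↥(closure W))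
    (hk : IsKThetaCompact X) : IsWCompact X := by
  classical
  intro S hS hfip
  obtain ⟨x₀, _⟩ := hfip ∅ (by simp)
  -- the auxiliary space Y = Option X
  set 𝒢 : Set (Set (Option X)) := {O | none ∉ O} ∪
    {O | ∃ T : Finset (Set X), ↑T ⊆ S ∧ O = insert none (Option.some '' ⋂₀ (T : Set (Set X)))}
    with h𝒢
  letI tY : TopologicalSpace (Option X) := TopologicalSpace.generateFrom 𝒢
  -- extraction lemma for opens containing none
  have hgen : ∀ O : Set (Option X), TopologicalSpace.GenerateOpen 𝒢 O → none ∈ O →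
      ∃ T : Finset (Set X), ↑T ⊆ S ∧
        insert none (Option.some '' ⋂₀ (T : Set (Set X))) ⊆ O := by
    intro O hO
    induction hO with
    | basic O hO =>
      intro hnone
      rcases hO with hO | ⟨T, hT, rfl⟩
      · exact absurd hnone hO
      · exact ⟨T, hT, subset_rfl⟩
    | univ =>
      intro _
      exact ⟨∅, by simp, by simp⟩
    | inter O₁ O₂ h₁ h₂ ih₁ ih₂ =>
      intro hnone
      obtain ⟨T₁, hT₁, hs₁⟩ := ih₁ hnone.1
      obtain ⟨T₂, hT₂, hs₂⟩ := ih₂ hnone.2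
      refine ⟨T₁ ∪ T₂, by rw [Finset.coe_union]; exact Set.union_subset hT₁ hT₂, ?_⟩
      have hsub : ⋂₀ ((T₁ ∪ T₂ : Finset (Set X)) : Set (Set X)) ⊆
          ⋂₀ (T₁ : Set (Set X)) ∩ ⋂₀ (T₂ : Set (Set X)) := by
        rw [Finset.coe_union]
        intro a ha
        exact ⟨fun P hP => ha P (Set.mem_union_left _ hP),
               fun P hP => ha P (Set.mem_union_right _ hP)⟩
      intro z hz
      rcases Set.mem_insert_iff.mp hz with rfl | ⟨a, ha, rfl⟩
      · exact ⟨hnone.1, hnone.2⟩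
      · exact ⟨hs₁ (Set.mem_insert_iff.mpr (Or.inr ⟨a, (hsub ha).1, rfl⟩)),
               hs₂ (Set.mem_insert_iff.mpr (Or.inr ⟨a, (hsub ha).2, rfl⟩))⟩
    | sUnion 𝔖 h𝔖 ih =>
      intro hnone
      obtain ⟨O', hO', hnone'⟩ := hnone
      obtain ⟨T, hT, hs⟩ := ih O' hO' hnone'
      exact ⟨T, hT, hs.trans (Set.subset_sUnion_of_mem hO')⟩
  -- the set M
  set M : Set (X × Option X) := Set.range (fun a : X => ((a, Option.some a) : X × Option X))
    with hM
  have hnoneθ : none ∈ thetaClosure (Option X) (Prod.snd '' M) := by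
    show evalMap (Option X) none ∈ closure (evalMap (Option X) '' (Prod.snd '' M))
    rw [memClosurePi]
    intro F ε hε
    have hch : ∀ g : {g : C(Option X, unitInterval) // g ∈ F},
        ∃ T : Finset (Set X), ↑T ⊆ S ∧
          insert none (Option.some '' ⋂₀ (T : Set (Set X))) ⊆
            g.1 ⁻¹' Metric.ball (g.1 none) ε := by
      intro g
      refine hgen _ ?_ ?_
      · exact (g.1.continuous.isOpen_preimage _ Metric.isOpen_ball : IsOpen _)
      · exact Set.mem_preimage.mpr (Metric.mem_ball_self hε)
    choose Tf hTfS hTfsub using hch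
    obtain ⟨a, ha⟩ := hfip (F.attach.biUnion Tf) (by
      intro P hP
      rw [Finset.mem_coe, Finset.mem_biUnion] at hP
      obtain ⟨g, _, hPg⟩ := hP
      exact hTfS g (Finset.mem_coe.mpr hPg))
    refine ⟨evalMap (Option X) (Option.some a),
      Set.mem_image_of_mem _ ⟨(a, Option.some a), ⟨a, rfl⟩, rfl⟩, ?_⟩
    intro g hg
    have haT : a ∈ ⋂₀ ((Tf ⟨g, hg⟩ : Finset (Set X)) : Set (Set X)) := by
      intro P hP
      exact Set.mem_sInter.mp ha P (Finset.mem_coe.mpr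
        (Finset.mem_biUnion.mpr ⟨⟨g, hg⟩, Finset.mem_attach _ _, hP⟩))
    have := hTfsub ⟨g, hg⟩ (Set.mem_insert_iff.mpr (Or.inr ⟨a, haT, rfl⟩))
    exact Metric.mem_ball.mp this
  have hkeq := hk (Option X) M
  have hnone2 : none ∈ Prod.snd '' thetaClosure (X × Option X) M := by
    rw [hkeq]; exact hnoneθ
  obtain ⟨⟨xs, yn⟩, hθ, hsnd⟩ := hnone2
  have hyn : yn = none := hsnd
  subst hyn
  obtain ⟨W, ⟨gW, hWg⟩, hxW, hZw⟩ := h xs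
  have hc : (0:ℝ) < (gW xs : ℝ) := by
    have hx' := hxW
    rw [hWg] at hx'
    simpa using Subtype.coe_lt_coe.mpr hx'
  refine core W gW hWg hZw ((gW xs : ℝ) / 2) (by linarith) S hS ?_
  intro T hT
  set U : Set (Option X) := insert none (Option.some '' ⋂₀ (T : Set (Set X))) with hU
  have hUopen : IsOpen U :=
    TopologicalSpace.isOpen_generateFrom_of_mem (Or.inr ⟨T, hT, rfl⟩)
  have hUcopen : IsOpen Uᶜ :=
    TopologicalSpace.isOpen_generateFrom_of_mem (Or.inl (fun hcon => hcon (Set.mem_insert _ _)))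
  have hkcont : Continuous fun z : Option X => if z ∈ U then (1 : unitInterval) else 0 := by
    rw [continuous_def]
    intro V _
    by_cases h1 : (1 : unitInterval) ∈ V <;> by_cases h0 : (0 : unitInterval) ∈ V
    · have hpre : (fun z : Option X => if z ∈ U then (1 : unitInterval) else 0) ⁻¹' V
          = Set.univ := by
        ext z; by_cases hz : z ∈ U <;> simp [hz, h1, h0]
      rw [hpre]; exact isOpen_univ
    · have hpre : (fun z : Option X => if z ∈ U then (1 : unitInterval) else 0) ⁻¹' V = U := by
        ext z; by_cases hz : z ∈ U <;> simp [hz, h1, h0]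
      rw [hpre]; exact hUopen
    · have hpre : (fun z : Option X => if z ∈ U then (1 : unitInterval) else 0) ⁻¹' V = Uᶜ := by
        ext z; by_cases hz : z ∈ U <;> simp [hz, h1, h0]
      rw [hpre]; exact hUcopen
    · have hpre : (fun z : Option X => if z ∈ U then (1 : unitInterval) else 0) ⁻¹' V
          = (∅ : Set (Option X)) := by
        ext z; by_cases hz : z ∈ U <;> simp [hz, h1, h0]
      rw [hpre]; exact isOpen_empty
  set k : C(Option X, unitInterval) := ⟨fun z => if z ∈ U then 1 else 0, hkcont⟩ with hkdef
  set h1CM : C(X × Option X, unitInterval) := k.comp ⟨Prod.snd, continuous_snd⟩ with hh1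
  set h2CM : C(X × Option X, unitInterval) := gW.comp ⟨Prod.fst, continuous_fst⟩ with hh2
  set εv : ℝ := min (1 / 2) ((gW xs : ℝ) / 2) with hεv
  have hεvpos : 0 < εv := lt_min (by norm_num) (by linarith)
  have hθ' : evalMap (X × Option X) (xs, none) ∈
      closure (evalMap (X × Option X) '' M) := hθ
  obtain ⟨q, hqA, hqd⟩ := (memClosurePi _ _).mp hθ' {h1CM, h2CM} εv hεvpos
  obtain ⟨mp, hmp, rfl⟩ := hqA
  obtain ⟨a, rfl⟩ := hmp
  have hd1 : dist (h1CM (a, Option.some a)) (h1CM (xs, none)) < εv :=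
    hqd h1CM (Finset.mem_insert_self _ _)
  have hd2 : dist (h2CM (a, Option.some a)) (h2CM (xs, none)) < εv :=
    hqd h2CM (Finset.mem_insert_of_mem (Finset.mem_singleton_self _))
  have he2 : h1CM (xs, none) = 1 := by
    show (if (none : Option X) ∈ U then (1 : unitInterval) else 0) = 1
    rw [if_pos (Set.mem_insert _ _)]
  rw [he2] at hd1
  have hmemT : a ∈ ⋂₀ (T : Set (Set X)) := by
    by_contra hna
    have hsome : Option.some a ∉ U := by
      intro hsa
      rcases Set.mem_insert_iff.mp hsa with h' | ⟨b, hb, hba⟩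
      · exact absurd h' (Option.some_ne_none a)
      · rw [Option.some.injEq] at hba
        subst hba
        exact hna hb
    have he1 : h1CM (a, Option.some a) = 0 := by
      show (if Option.some a ∈ U then (1 : unitInterval) else 0) = 0
      rw [if_neg hsome]
    rw [he1] at hd1
    have : dist (0 : unitInterval) (1 : unitInterval) = 1 := by
      rw [Subtype.dist_eq, Real.dist_eq]
      norm_num
    rw [this] at hd1
    have : εv ≤ 1 / 2 := min_le_left _ _
    linarith
  refine ⟨a, hmemT, ?_⟩
  have hd2' : dist ((gW a : ℝ)) ((gW xs : ℝ)) < εv := by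
    rw [← Subtype.dist_eq]
    exact hd2
  rw [Real.dist_eq, abs_sub_lt_iff] at hd2'
  have : εv ≤ (gW xs : ℝ) / 2 := min_le_right _ _
  linarith [hd2'.2]

/-- If every point of `X` has a cozero neighbourhood with w-compact closure, then
`K^θ`-compactness, w-compactness, and compactness of `τX = Φ_X(X)` are equivalent. -/
theorem isKThetaCompact_tfae (X : Type u) [TopologicalSpace X]
    (h : ∀ x : X, ∃ W : Set X, IsCozeroSet X W ∧ x ∈ W ∧ IsWCompact (closure W)) :
    (IsKThetaCompact X ↔ IsWCompact X) ∧
      (IsWCompact X ↔ IsCompact (Set.range (evalMap X))) :=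
  ⟨⟨fun hk => kt2w h hk, fun hw => w2kt h (w2c hw)⟩,
   ⟨fun hw => w2c hw, fun hc => c2w h hc⟩⟩
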